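/- Let μ₁ < μ₂, σ₁, σ₂ > 0 and α₁, α₂ > 0, and let I₁, I₂, γ* be as in the Gaussian pairwise rate computation: I_i(γ) = (γ − μ_i)²/(2σ_i²) and γ* = (α₁ μ₁/σ₁² + α₂ μ₂/σ₂²)/(α₁/σ₁² + α₂/σ₂²). Then the ratio I₁(γ*)/I₂(γ*) equals (σ₁² α₂²)/(α₁² σ₂²). -/

import Mathlib

open Real

/-- The ratio `I₁(γ*)/I₂(γ*)` of the two Gaussian rate functions at the
balancing point `γ*` equals `σ₁²α₂²/(α₁²σ₂²)`. -/
theorem gaussian_rate_ratio (μ₁ μ₂ σ₁ σ₂ α₁ α₂ : ℝ)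
    (hμ : μ₁ < μ₂) (hσ₁ : 0 < σ₁) (hσ₂ : 0 < σ₂) (hα₁ : 0 < α₁) (hα₂ : 0 < α₂) :
    (((α₁ * μ₁ / σ₁ ^ 2 + α₂ * μ₂ / σ₂ ^ 2) / (α₁ / σ₁ ^ 2 + α₂ / σ₂ ^ 2) - μ₁) ^ 2
        / (2 * σ₁ ^ 2))
      / (((α₁ * μ₁ / σ₁ ^ 2 + α₂ * μ₂ / σ₂ ^ 2) / (α₁ / σ₁ ^ 2 + α₂ / σ₂ ^ 2) - μ₂) ^ 2
        / (2 * σ₂ ^ 2))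
      = σ₁ ^ 2 * α₂ ^ 2 / (α₁ ^ 2 * σ₂ ^ 2) := by
  have hs1 : σ₁ ^ 2 ≠ 0 := by positivity
  have hs2 : σ₂ ^ 2 ≠ 0 := by positivity
  have hD : α₁ / σ₁ ^ 2 + α₂ / σ₂ ^ 2 > 0 := by positivity
  have hμ' : μ₂ - μ₁ ≠ 0 := sub_ne_zero.mpr hμ.ne'
  have h1 : (α₁ * μ₁ / σ₁ ^ 2 + α₂ * μ₂ / σ₂ ^ 2) / (α₁ / σ₁ ^ 2 + α₂ / σ₂ ^ 2) - μ₁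
      = α₂ * (μ₂ - μ₁) / σ₂ ^ 2 / (α₁ / σ₁ ^ 2 + α₂ / σ₂ ^ 2) := by
    field_simp
    ring
  have h2 : (α₁ * μ₁ / σ₁ ^ 2 + α₂ * μ₂ / σ₂ ^ 2) / (α₁ / σ₁ ^ 2 + α₂ / σ₂ ^ 2) - μ₂
      = -(α₁ * (μ₂ - μ₁) / σ₁ ^ 2) / (α₁ / σ₁ ^ 2 + α₂ / σ₂ ^ 2) := by
    field_simp
    ring
  rw [h1, h2]
  field_simp
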